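/- Let C be a small category satisfying the right Ore condition and I an ideal of the presheaf category on C with I(C) nonempty for every object C. Then the double negation topology ¬¬ on presheaves on C coincides with the I-double negation operator: for every object C and sieve T on C, ¬¬_C(T) = {f | ∀ g ∈ I(dom f), ∃ h ∈ I(dom g), f∘g∘h ∈ T}, where ¬¬_C(T) = {f | ∀ g with codomain dom f, ∃ h with codomain dom g, f∘g∘h ∈ T}. -/
import Mathlib


open CategoryTheory Opposite CategoryTheory.GrothendieckTopology

universe v u

variable {C : Type u} [Category.{v} C]

/-- An ideal of the presheaf category on `C`: a family of sieves `I(X)` such that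
`f ∘ g ∈ I(D)` whenever `f : X ⟶ D` and `g ∈ I(X)`. -/
structure CIdeal (C : Type u) [Category.{v} C] where
  sieve : ∀ X : C, Sieve X
  comp : ∀ ⦃X D : C⦄ (f : X ⟶ D) ⦃Y : C⦄ (g : Y ⟶ X), sieve X g → sieve D (g ≫ f)

/-- `I²(X) = { f ∘ g | f ∈ I(X), g ∈ I(dom f) }`. -/
def CIdeal.sq (I : CIdeal C) (X : C) : ∀ ⦃Y : C⦄, (Y ⟶ X) → Prop :=
  fun _Y h => ∃ (Z : C) (f : Z ⟶ X) (g : _Y ⟶ Z), I.sieve X f ∧ I.sieve Z g ∧ h = g ≫ f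

/-- The `I`-closure of a family of subsets of the values of a presheaf `F`. -/
def CIdeal.cl (I : CIdeal C) (F : Cᵒᵖ ⥤ Type v)
    (G : ∀ X : C, Set (F.obj (op X))) (X : C) : Set (F.obj (op X)) :=
  {x | ∀ ⦃Y : C⦄ (f : Y ⟶ X), I.sieve X f → F.map f.op x ∈ G Y}

/-- The right Ore condition: any cospan can be completed to a commutative square. -/
def RightOre (C : Type u) [Category.{v} C] : Prop :=
  ∀ ⦃A B X : C⦄ (f : A ⟶ X) (g : B ⟶ X), ∃ (D : C) (u : D ⟶ A) (v : D ⟶ B), u ≫ f = v ≫ g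

/-- if `C` satisfies the right Ore condition and `I(X) ≠ ∅` for all `X`,
the double negation topology coincides with the `I`-double negation operator:
`¬¬(T) = { f | ∀ g ∈ I(dom f), ∃ h ∈ I(dom g), f∘g∘h ∈ T }`. -/
theorem negneg_eq_negnegI (hOre : RightOre C) (I : CIdeal C)
    (hne : ∀ X : C, ∃ (Y : C) (g : Y ⟶ X), I.sieve X g)
    (X : C) (T : Sieve X) ⦃Y : C⦄ (f : Y ⟶ X) :
    (∀ ⦃Z : C⦄ (g : Z ⟶ Y), ∃ (W : C) (h : W ⟶ Z), T (h ≫ g ≫ f))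
      ↔ (∀ ⦃Z : C⦄ (g : Z ⟶ Y), I.sieve Y g →
          ∃ (W : C) (h : W ⟶ Z), I.sieve Z h ∧ T (h ≫ g ≫ f)) := by
  constructor
  · intro H Z g hg
    obtain ⟨W, h, hT⟩ := H g
    obtain ⟨V, g₁, hg₁⟩ := hne W
    refine ⟨V, g₁ ≫ h, I.comp h g₁ hg₁, ?_⟩
    simpa using T.downward_closed hT g₁
  · intro H Z g
    obtain ⟨Z₀, g₀, hg₀⟩ := hne Y
    obtain ⟨D, u, v, huv⟩ := hOre g g₀
    obtain ⟨W, h, hh, hT⟩ := H (v ≫ g₀) (Sieve.downward_closed _ hg₀ v)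
    refine ⟨W, h ≫ u, ?_⟩
    have e : h ≫ v ≫ g₀ ≫ f = h ≫ u ≫ g ≫ f := by
      rw [← Category.assoc v, ← huv, Category.assoc]
    simpa [e] using hT
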